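/- Integral representation of the Gramian and output energy: if A is Hurwitz and C ∈ ℂ^{m×n}, then the integral P := ∫₀^∞ exp(Aᴴt) Cᴴ C exp(At) dt converges, the matrix P satisfies the Lyapunov equation Aᴴ P + P A = −Cᴴ C, and for every x₀ ∈ ℂⁿ one has ∫₀^∞ ‖C exp(At) x₀‖² dt = x₀ᴴ P x₀. -/

import Mathlib

open Matrix MeasureTheory BigOperators

section Aux
open Set Filter Complex

lemma gram_aux_integrable {μ : ℂ} (hμ : μ.re < 0) :
    IntegrableOn (fun t : ℝ => Complex.exp (t * μ)) (Set.Ioi 0) := by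
  have hb : (0:ℝ) < -μ.re := by linarith
  refine (exp_neg_integrableOn_Ioi 0 hb).mono' ?_ ?_
  · exact (Complex.continuous_exp.comp (by continuity)).aestronglyMeasurable
  · filter_upwards with t
    simp [Complex.norm_exp, Real.exp_le_exp, mul_comm]

lemma gram_aux_integral {μ : ℂ} (hμ : μ.re < 0) :
    ∫ t in Set.Ioi (0:ℝ), Complex.exp (t * μ) = -μ⁻¹ := by
  have hμ0 : μ ≠ 0 := fun h => by simp [h] at hμ
  have h1 := intervalIntegral_tendsto_integral_Ioi 0 (gram_aux_integrable hμ) tendsto_id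
  have h2 : Tendsto (fun T : ℝ => ∫ t in (0:ℝ)..T, Complex.exp (t * μ)) atTop (nhds (-μ⁻¹)) := by
    have heq : ∀ T : ℝ, (∫ t in (0:ℝ)..T, Complex.exp (t * μ))
        = (Complex.exp (μ * T) - 1) / μ := by
      intro T
      rw [show (fun t : ℝ => Complex.exp (t * μ)) = fun t : ℝ => Complex.exp (μ * t) by
        funext t; rw [mul_comm]]
      rw [integral_exp_mul_complex hμ0]
      simp
    simp only [heq]
    have h3 : Tendsto (fun T : ℝ => Complex.exp (μ * T)) atTop (nhds 0) := by
      rw [tendsto_zero_iff_norm_tendsto_zero]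
      have h5 : Tendsto (fun T : ℝ => μ.re * T) atTop atBot :=
        tendsto_id.const_mul_atTop_of_neg hμ
      refine (Real.tendsto_exp_atBot.comp h5).congr fun T => ?_
      simp [Complex.norm_exp]
    have h4 : Tendsto (fun T : ℝ => (Complex.exp (μ * T) - 1) / μ) atTop
        (nhds ((0 - 1) / μ)) := (h3.sub (tendsto_const_nhds (x := (1:ℂ)))).div_const μ
    rw [show -μ⁻¹ = (0 - 1)/μ by ring]; exact h4
  exact tendsto_nhds_unique h1 h2

end Aux

/-- Integral representation of the Gramian and output energy: if `A` is Hurwitz and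
`C ∈ ℂ^{m×n}`, then the integral `P := ∫₀^∞ exp(Aᴴt) Cᴴ C exp(At) dt` converges (entrywise),
`P` satisfies `Aᴴ P + P A = −Cᴴ C`, and for every `x₀ ∈ ℂⁿ`,
`∫₀^∞ ‖C exp(At) x₀‖² dt = x₀ᴴ P x₀` (Euclidean norm on `ℂ^m`). -/
theorem gramian_integral_representation
    (n : ℕ) (hn : 1 ≤ n)
    (A U V : Matrix (Fin n) (Fin n) ℂ) (lam : Fin n → ℂ)
    (hUV : U * V = 1) (hVU : V * U = 1)
    (hA : A = U * Matrix.diagonal lam * V)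
    (hHur : ∀ i, (lam i).re < 0)
    (m : ℕ) (C : Matrix (Fin m) (Fin n) ℂ) :
    (∀ k l, IntegrableOn
        (fun t : ℝ =>
          (NormedSpace.exp ((t : ℂ) • Aᴴ) * (Cᴴ * C) * NormedSpace.exp ((t : ℂ) • A)) k l)
        (Set.Ioi 0)) ∧
    Aᴴ * (Matrix.of fun k l => ∫ t in Set.Ioi (0 : ℝ),
          (NormedSpace.exp ((t : ℂ) • Aᴴ) * (Cᴴ * C) * NormedSpace.exp ((t : ℂ) • A)) k l) +
      (Matrix.of fun k l => ∫ t in Set.Ioi (0 : ℝ),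
          (NormedSpace.exp ((t : ℂ) • Aᴴ) * (Cᴴ * C) * NormedSpace.exp ((t : ℂ) • A)) k l) * A
      = -(Cᴴ * C) ∧
    ∀ x₀ : Fin n → ℂ,
      ((∫ t in Set.Ioi (0 : ℝ),
          ‖(WithLp.equiv 2 (Fin m → ℂ)).symm
            ((C * NormedSpace.exp ((t : ℂ) • A)).mulVec x₀)‖ ^ 2 : ℝ) : ℂ) =
        dotProduct (star x₀)
          ((Matrix.of fun k l => ∫ t in Set.Ioi (0 : ℝ),
            (NormedSpace.exp ((t : ℂ) • Aᴴ) * (Cᴴ * C) *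
              NormedSpace.exp ((t : ℂ) • A)) k l).mulVec x₀) := by
  classical
  -- the exponents
  set g : Fin n → Fin n → ℂ := fun i j => (starRingEnd ℂ) (lam i) + lam j with hgdef
  have hg : ∀ i j, (g i j).re < 0 := by
    intro i j
    have := hHur i; have := hHur j
    simp only [hgdef, Complex.add_re, Complex.conj_re]
    linarith
  have hgne : ∀ i j, g i j ≠ 0 := by
    intro i j h
    have := hg i j
    rw [h] at this
    simp at this
  set B : Matrix (Fin n) (Fin n) ℂ := Uᴴ * (Cᴴ * C) * U with hBdef
  -- the exponential formulas
  have hE : ∀ t : ℝ, NormedSpace.exp ((t : ℂ) • A)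
      = U * Matrix.diagonal (fun i => Complex.exp (t * lam i)) * V := by
    intro t
    have hsm : (t:ℂ) • A = U * Matrix.diagonal (fun i => (t:ℂ) * lam i) * V := by
      rw [hA]
      rw [show (t:ℂ) • (U * Matrix.diagonal lam * V)
          = U * ((t:ℂ) • Matrix.diagonal lam) * V by
        simp [Matrix.smul_mul, Matrix.mul_smul]]
      rw [show (t:ℂ) • Matrix.diagonal lam = Matrix.diagonal (fun i => (t:ℂ) * lam i) by
        rw [show (fun i => (t:ℂ) * lam i) = (t:ℂ) • lam from rfl, Matrix.diagonal_smul]]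
    let Uu : (Matrix (Fin n) (Fin n) ℂ)ˣ := ⟨U, V, hUV, hVU⟩
    have h := Matrix.exp_units_conj Uu (Matrix.diagonal fun i => (t:ℂ) * lam i)
    have hinv : ((Uu⁻¹ : (Matrix (Fin n) (Fin n) ℂ)ˣ) : Matrix (Fin n) (Fin n) ℂ) = V := rfl
    rw [hinv] at h
    rw [hsm, h, Matrix.exp_diagonal]
    congr 2
    funext i
    simp [Pi.exp_def, Complex.exp_eq_exp_ℂ]
  have hEH : ∀ t : ℝ, NormedSpace.exp ((t : ℂ) • Aᴴ)
      = (NormedSpace.exp ((t : ℂ) • A))ᴴ := by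
    intro t
    rw [← Matrix.exp_conjTranspose]
    congr 1
    rw [Matrix.conjTranspose_smul]
    norm_num
  -- entrywise formula for the integrand
  have hMmat : ∀ t : ℝ,
      NormedSpace.exp ((t : ℂ) • Aᴴ) * (Cᴴ * C) * NormedSpace.exp ((t : ℂ) • A)
        = Vᴴ * (Matrix.of fun i j => B i j * Complex.exp (t * g i j)) * V := by
    intro t
    rw [hEH t, hE t]
    have hDH : (U * Matrix.diagonal (fun i => Complex.exp (t * lam i)) * V)ᴴ
        = Vᴴ * Matrix.diagonal (fun i => Complex.exp (t * (starRingEnd ℂ) (lam i))) * Uᴴ := by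
      simp only [Matrix.conjTranspose_mul, Matrix.diagonal_conjTranspose]
      rw [Matrix.mul_assoc]
      have hd : star (fun i => Complex.exp ((t:ℂ) * lam i))
          = fun i => Complex.exp ((t:ℂ) * (starRingEnd ℂ) (lam i)) := by
        funext i
        simp only [Pi.star_apply]
        rw [show star (Complex.exp ((t:ℂ) * lam i))
            = (starRingEnd ℂ) (Complex.exp ((t:ℂ) * lam i)) from rfl, ← Complex.exp_conj]
        congr 1
        simp
      rw [hd]
    rw [hDH]
    have hX : Matrix.diagonal (fun i => Complex.exp (t * (starRingEnd ℂ) (lam i))) * B *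
        Matrix.diagonal (fun i => Complex.exp (t * lam i))
        = Matrix.of fun i j => B i j * Complex.exp (t * g i j) := by
      ext i j
      rw [Matrix.mul_diagonal, Matrix.diagonal_mul, Matrix.of_apply]
      have hgij : g i j = (starRingEnd ℂ) (lam i) + lam j := rfl
      rw [hgij, mul_add, Complex.exp_add]
      ring
    rw [← hX, hBdef]
    noncomm_ring
  have hM : ∀ (t : ℝ) k l,
      (NormedSpace.exp ((t : ℂ) • Aᴴ) * (Cᴴ * C) * NormedSpace.exp ((t : ℂ) • A)) k l
        = ∑ j, ∑ i, (Vᴴ k i * B i j * V j l) * Complex.exp (t * g i j) := by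
    intro t k l
    rw [hMmat t]
    rw [Matrix.mul_apply]
    refine Finset.sum_congr rfl fun j _ => ?_
    rw [Matrix.mul_apply, Finset.sum_mul]
    refine Finset.sum_congr rfl fun i _ => ?_
    rw [Matrix.of_apply]
    ring
  -- Part 1 : integrability
  have hInt : ∀ k l, IntegrableOn
      (fun t : ℝ =>
        (NormedSpace.exp ((t : ℂ) • Aᴴ) * (Cᴴ * C) * NormedSpace.exp ((t : ℂ) • A)) k l)
      (Set.Ioi 0) := by
    intro k l
    have : IntegrableOn
        (fun t : ℝ => ∑ j, ∑ i, (Vᴴ k i * B i j * V j l) * Complex.exp (t * g i j))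
        (Set.Ioi 0) := by
      refine integrable_finset_sum _ fun j _ => integrable_finset_sum _ fun i _ => ?_
      exact (gram_aux_integrable (hg i j)).const_mul _
    exact this.congr_fun (fun t _ => (hM t k l).symm) measurableSet_Ioi
  refine ⟨hInt, ?_, ?_⟩
  -- the value of the integral
  · have hPval : ∀ k l, (∫ t in Set.Ioi (0:ℝ),
        (NormedSpace.exp ((t : ℂ) • Aᴴ) * (Cᴴ * C) * NormedSpace.exp ((t : ℂ) • A)) k l)
        = ∑ j, ∑ i, (Vᴴ k i * B i j * V j l) * (-(g i j)⁻¹) := by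
      intro k l
      rw [setIntegral_congr_fun measurableSet_Ioi (fun t _ => hM t k l)]
      rw [integral_finset_sum _ fun j _ =>
        integrable_finset_sum _ fun i _ => (gram_aux_integrable (hg i j)).const_mul _]
      refine Finset.sum_congr rfl fun j _ => ?_
      rw [integral_finset_sum _ fun i _ => (gram_aux_integrable (hg i j)).const_mul _]
      refine Finset.sum_congr rfl fun i _ => ?_
      rw [integral_const_mul, gram_aux_integral (hg i j)]
    set Q : Matrix (Fin n) (Fin n) ℂ := Matrix.of fun i j => B i j * (-(g i j)⁻¹) with hQdef
    have hPQ : (Matrix.of fun k l => ∫ t in Set.Ioi (0 : ℝ),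
        (NormedSpace.exp ((t : ℂ) • Aᴴ) * (Cᴴ * C) * NormedSpace.exp ((t : ℂ) • A)) k l)
        = Vᴴ * Q * V := by
      ext k l
      rw [Matrix.of_apply, hPval k l, Matrix.mul_apply]
      refine Finset.sum_congr rfl fun j _ => ?_
      rw [Matrix.mul_apply, Finset.sum_mul]
      refine Finset.sum_congr rfl fun i _ => ?_
      rw [hQdef, Matrix.of_apply]
      ring
    rw [hPQ]
    have hAH : Aᴴ = Vᴴ * Matrix.diagonal (fun i => (starRingEnd ℂ) (lam i)) * Uᴴ := by
      rw [hA]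
      simp only [Matrix.conjTranspose_mul, Matrix.diagonal_conjTranspose]
      rw [Matrix.mul_assoc]
      congr 2
    have h1 : Uᴴ * Vᴴ = 1 := by rw [← Matrix.conjTranspose_mul, hVU, Matrix.conjTranspose_one]
    have h2 : Vᴴ * Uᴴ = 1 := by rw [← Matrix.conjTranspose_mul, hUV, Matrix.conjTranspose_one]
    have hdiagQ : Matrix.diagonal (fun i => (starRingEnd ℂ) (lam i)) * Q
        + Q * Matrix.diagonal lam = -B := by
      ext i j
      rw [Matrix.add_apply, Matrix.diagonal_mul, Matrix.mul_diagonal, Matrix.neg_apply,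
        hQdef, Matrix.of_apply]
      have hne := hgne i j
      have hcancel : g i j * (g i j)⁻¹ = 1 := mul_inv_cancel₀ hne
      have hexp : (starRingEnd ℂ) (lam i) + lam j = g i j := by rw [hgdef]
      calc (starRingEnd ℂ) (lam i) * (B i j * -(g i j)⁻¹)
            + B i j * -(g i j)⁻¹ * lam j
          = -(B i j * (((starRingEnd ℂ) (lam i) + lam j) * (g i j)⁻¹)) := by ring
        _ = -(B i j * (g i j * (g i j)⁻¹)) := by rw [hexp]
        _ = -B i j := by rw [hcancel, mul_one]
    have key1 : Aᴴ * (Vᴴ * Q * V)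
        = Vᴴ * (Matrix.diagonal (fun i => (starRingEnd ℂ) (lam i)) * Q) * V := by
      rw [hAH]
      calc Vᴴ * Matrix.diagonal (fun i => (starRingEnd ℂ) (lam i)) * Uᴴ * (Vᴴ * Q * V)
          = Vᴴ * Matrix.diagonal (fun i => (starRingEnd ℂ) (lam i)) * ((Uᴴ * Vᴴ) * Q * V) := by
            noncomm_ring
        _ = Vᴴ * (Matrix.diagonal (fun i => (starRingEnd ℂ) (lam i)) * Q) * V := by
            rw [h1, Matrix.one_mul]; noncomm_ring
    have key2 : (Vᴴ * Q * V) * A = Vᴴ * (Q * Matrix.diagonal lam) * V := by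
      rw [hA]
      calc Vᴴ * Q * V * (U * Matrix.diagonal lam * V)
          = Vᴴ * Q * ((V * U) * Matrix.diagonal lam * V) := by noncomm_ring
        _ = Vᴴ * (Q * Matrix.diagonal lam) * V := by rw [hVU, Matrix.one_mul]; noncomm_ring
    have hVBV : Vᴴ * B * V = Cᴴ * C := by
      rw [hBdef]
      calc Vᴴ * (Uᴴ * (Cᴴ * C) * U) * V
          = (Vᴴ * Uᴴ) * (Cᴴ * C) * (U * V) := by noncomm_ring
        _ = Cᴴ * C := by rw [h2, hUV, Matrix.one_mul, Matrix.mul_one]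
    rw [key1, key2, ← Matrix.add_mul, ← Matrix.mul_add, hdiagQ]
    calc Vᴴ * -B * V = -(Vᴴ * B * V) := by noncomm_ring
      _ = -(Cᴴ * C) := by rw [hVBV]
  -- Part 3 : output energy
  · intro x₀
    -- pointwise identity
    have hpt : ∀ t : ℝ,
        ((‖(WithLp.equiv 2 (Fin m → ℂ)).symm
            ((C * NormedSpace.exp ((t : ℂ) • A)).mulVec x₀)‖ ^ 2 : ℝ) : ℂ)
          = dotProduct (star x₀)
            ((NormedSpace.exp ((t : ℂ) • Aᴴ) * (Cᴴ * C) *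
              NormedSpace.exp ((t : ℂ) • A)).mulVec x₀) := by
      intro t
      set N : Matrix (Fin m) (Fin n) ℂ := C * NormedSpace.exp ((t : ℂ) • A) with hNdef
      have hMN : NormedSpace.exp ((t : ℂ) • Aᴴ) * (Cᴴ * C) *
          NormedSpace.exp ((t : ℂ) • A) = Nᴴ * N := by
        rw [hEH t, hNdef, Matrix.conjTranspose_mul]
        simp only [Matrix.mul_assoc]
      rw [hMN]
      have hrhs : dotProduct (star x₀) ((Nᴴ * N).mulVec x₀)
          = dotProduct (star (N.mulVec x₀)) (N.mulVec x₀) := by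
        rw [← Matrix.mulVec_mulVec, dotProduct_mulVec, ← Matrix.star_mulVec]
      rw [hrhs]
      set w : Fin m → ℂ := N.mulVec x₀ with hwdef
      have hdot : dotProduct (star w) w = ∑ k, ((‖w k‖ ^ 2 : ℝ) : ℂ) := by
        simp only [dotProduct, Pi.star_apply, RCLike.star_def]
        refine Finset.sum_congr rfl fun k _ => ?_
        rw [mul_comm, Complex.mul_conj]
        rw [Complex.normSq_eq_norm_sq]
      rw [hdot]
      have hnorm : ‖(WithLp.equiv 2 (Fin m → ℂ)).symm w‖ ^ 2 = ∑ k, ‖w k‖ ^ 2 := by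
        rw [EuclideanSpace.norm_eq]
        rw [Real.sq_sqrt (Finset.sum_nonneg fun k _ => sq_nonneg _)]
        rfl
      rw [hnorm]
      push_cast
      rfl
    -- rewrite LHS as a complex integral
    rw [show ((∫ t in Set.Ioi (0 : ℝ),
        ‖(WithLp.equiv 2 (Fin m → ℂ)).symm
          ((C * NormedSpace.exp ((t : ℂ) • A)).mulVec x₀)‖ ^ 2 : ℝ) : ℂ)
        = ∫ t in Set.Ioi (0 : ℝ),
          ((‖(WithLp.equiv 2 (Fin m → ℂ)).symm
            ((C * NormedSpace.exp ((t : ℂ) • A)).mulVec x₀)‖ ^ 2 : ℝ) : ℂ) from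
      (integral_ofReal).symm]
    rw [setIntegral_congr_fun measurableSet_Ioi (fun t _ => hpt t)]
    -- now exchange the finite sum and the integral
    have hexp : ∀ t : ℝ, dotProduct (star x₀)
        ((NormedSpace.exp ((t : ℂ) • Aᴴ) * (Cᴴ * C) *
          NormedSpace.exp ((t : ℂ) • A)).mulVec x₀)
        = ∑ k, ∑ l, star (x₀ k) *
          ((NormedSpace.exp ((t : ℂ) • Aᴴ) * (Cᴴ * C) *
            NormedSpace.exp ((t : ℂ) • A)) k l * x₀ l) := by
      intro t
      simp only [dotProduct, Matrix.mulVec, Pi.star_apply, Finset.mul_sum]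
    rw [setIntegral_congr_fun measurableSet_Ioi (fun t _ => hexp t)]
    rw [integral_finset_sum _ fun k _ => integrable_finset_sum _ fun l _ =>
      (((hInt k l).mul_const (x₀ l)).const_mul (star (x₀ k)))]
    have hrhs2 : dotProduct (star x₀)
        ((Matrix.of fun k l => ∫ t in Set.Ioi (0 : ℝ),
          (NormedSpace.exp ((t : ℂ) • Aᴴ) * (Cᴴ * C) *
            NormedSpace.exp ((t : ℂ) • A)) k l).mulVec x₀)
        = ∑ k, ∑ l, star (x₀ k) * ((∫ t in Set.Ioi (0 : ℝ),
            (NormedSpace.exp ((t : ℂ) • Aᴴ) * (Cᴴ * C) *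
              NormedSpace.exp ((t : ℂ) • A)) k l) * x₀ l) := by
      simp only [dotProduct, Matrix.mulVec, Pi.star_apply, Finset.mul_sum, Matrix.of_apply]
    rw [hrhs2]
    refine Finset.sum_congr rfl fun k _ => ?_
    rw [integral_finset_sum _ fun l _ => ((hInt k l).mul_const (x₀ l)).const_mul (star (x₀ k))]
    refine Finset.sum_congr rfl fun l _ => ?_
    rw [integral_const_mul, integral_mul_const]
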